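/- Let G be a group with a normal subgroup R that has trivial center, and let π : G → G/R be the quotient map. Then the centralizer Λ of R in G is a normal subgroup of G, and the restriction of π to Λ is an isomorphism onto the kernel of the monodromy morphism G/R → Out(R) induced by conjugation. -/

import Mathlib

/-- The inner automorphism group of `R`. -/
def innerAut (R : Type*) [Group R] : Subgroup (MulAut R) := (MulAut.conj : R →* MulAut R).range

instance (R : Type*) [Group R] : (innerAut R).Normal := by
  constructor
  rintro σ ⟨r, rfl⟩ τ
  refine ⟨τ r, ?_⟩
  ext x
  simp [MulAut.conj, mul_assoc]

/-- The outer automorphism group of `R`. -/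
def OutAut (R : Type*) [Group R] := MulAut R ⧸ innerAut R

instance (R : Type*) [Group R] : Group (OutAut R) := by unfold OutAut; infer_instance

/-- If `R ⊴ G` has trivial center, the centralizer `Λ` of `R` in `G` is normal in `G` and the
quotient map `π : G → G/R` restricts on `Λ` to an isomorphism onto the kernel of the
monodromy morphism `G/R → Out(R)` (induced by conjugation). -/
theorem centralizer_normal_and_iso_monodromy_kernel
    (G : Type*) [Group G] (R : Subgroup G) [R.Normal]
    (hcenter : Subgroup.center ↥R = ⊥)
    (ρ : G ⧸ R →* OutAut ↥R)
    (hρ : ∀ g : G, ρ (QuotientGroup.mk g) =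
      QuotientGroup.mk (s := innerAut ↥R) (MulAut.conjNormal g)) :
    (Subgroup.centralizer (R : Set G)).Normal ∧
    Function.Injective
      (fun x : ↥(Subgroup.centralizer (R : Set G)) => QuotientGroup.mk' R (x : G)) ∧
    Subgroup.map (QuotientGroup.mk' R) (Subgroup.centralizer (R : Set G)) = ρ.ker := by
  refine ⟨⟨?_⟩, ?_, ?_⟩
  · intro n hn x
    intro s hs
    have hs' : x⁻¹ * s * x ∈ R := by
      have := Subgroup.Normal.conj_mem ‹R.Normal› s hs x⁻¹
      simpa using this
    have hc := hn _ hs'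
    -- hc : (x⁻¹ * s * x) * n = n * (x⁻¹ * s * x)
    have : s * (x * n * x⁻¹) = x * ((x⁻¹ * s * x) * n) * x⁻¹ := by group
    rw [this, hc]; group
  · intro x y hxy
    have hmem : (y : G)⁻¹ * x ∈ R := by
      have := (QuotientGroup.eq (s := R) (a := (y : G)) (b := (x : G))).mp ?_
      · exact this
      · simpa using hxy.symm
    have hcent : (y : G)⁻¹ * (x : G) ∈ Subgroup.centralizer (R : Set G) :=
      (Subgroup.centralizer (R : Set G)).mul_mem (Subgroup.inv_mem _ y.2) x.2
    have hz : (⟨(y : G)⁻¹ * x, hmem⟩ : R) ∈ Subgroup.center R := by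
      rw [Subgroup.mem_center_iff]
      intro r
      exact Subtype.ext (hcent r r.2)
    rw [hcenter, Subgroup.mem_bot] at hz
    have : (y : G)⁻¹ * x = 1 := congrArg Subtype.val hz
    ext
    exact (inv_mul_eq_one.mp this).symm
  · ext q
    refine ⟨?_, ?_⟩
    · rintro ⟨x, hx, rfl⟩
      rw [MonoidHom.mem_ker]
      have h1 : MulAut.conjNormal (H := R) x = 1 := by
        ext r
        simpa [MulAut.conjNormal_apply, mul_inv_eq_iff_eq_mul] using (hx r r.2).symm
      simp [QuotientGroup.mk'_apply, hρ x, h1]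
      rfl
    · intro hq
      obtain ⟨g, rfl⟩ := QuotientGroup.mk_surjective q
      rw [MonoidHom.mem_ker, hρ g] at hq
      replace hq := (QuotientGroup.eq_one_iff (N := innerAut ↥R) _).mp hq
      obtain ⟨r, hr⟩ := hq
      refine ⟨(r : G)⁻¹ * g, ?_, ?_⟩
      · intro s hs
        have := congrArg (fun f : MulAut R => ((f ⟨s, hs⟩ : R) : G)) hr
        simp only [MulAut.conj_apply, MulAut.conjNormal_apply] at this
        have h2 : (r : G) * s * (r : G)⁻¹ = g * s * g⁻¹ := by
          simpa using this
        have : s * ((r : G)⁻¹ * g) = (r : G)⁻¹ * ((r : G) * s * (r : G)⁻¹) * g := by group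
        rw [this, h2]; group
      · simp only [QuotientGroup.mk'_apply]
        rw [QuotientGroup.eq]
        have heq : ((r : G)⁻¹ * g)⁻¹ * g = g⁻¹ * r * g := by group
        rw [heq]
        have := Subgroup.Normal.conj_mem ‹R.Normal› r r.2 g⁻¹
        simpa using this
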